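/- arXiv:1011.3601 — 3 statements merged into one kernel-verified Lean document; each statement's English description precedes it below -/
import Mathlib

section
/- There exist constants κ > 0 and c > 0 such that for every p ∈ [1-q, 1) (where q ∈ (0,1) is fixed) and every Δ ∈ [0,c], a geometric random variable X with parameter p satisfies E[exp((X - 1/p - Δ)·κΔ)] ≤ exp(-0.5·Δ²·κ). -/
set_option maxHeartbeats 1000000

open MeasureTheory

lemma exp_neg_le' (x : ℝ) (hx : 0 ≤ x) : Real.exp (-x) ≤ 1 - x + x^2 := by
  have h1 : x + 1 ≤ Real.exp x := Real.add_one_le_exp x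
  have h3 : (0:ℝ) < Real.exp x := Real.exp_pos x
  rw [Real.exp_neg x]
  have h4 : (Real.exp x)⁻¹ ≤ (1 + x)⁻¹ := inv_anti₀ (by linarith) (by linarith)
  have h5 : (1 + x)⁻¹ ≤ 1 - x + x^2 := by
    rw [inv_le_iff_one_le_mul₀ (by linarith)]
    nlinarith
  linarith

lemma exp_le' (t : ℝ) (ht : t ≤ 1/2) : Real.exp t ≤ 1 + t + 2*t^2 := by
  have h1 : -t + 1 ≤ Real.exp (-t) := Real.add_one_le_exp (-t)
  have h3 : (0:ℝ) < Real.exp (-t) := Real.exp_pos _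
  have h2 : Real.exp t = (Real.exp (-t))⁻¹ := by rw [← Real.exp_neg, neg_neg]
  rw [h2]
  have h4 : (Real.exp (-t))⁻¹ ≤ (1 - t)⁻¹ := inv_anti₀ (by linarith) (by linarith)
  have h5 : (1 - t)⁻¹ ≤ 1 + t + 2*t^2 := by
    rw [inv_le_iff_one_le_mul₀ (by linarith)]
    nlinarith
  linarith

lemma core_ineq (q r t s : ℝ) (hq0 : 0 < q) (hq1 : q < 1) (hr0 : 0 < r) (hrq : r ≤ q)
    (ht0 : 0 ≤ t) (htq : t ≤ (1-q)/4) (hs0 : 0 ≤ s) (hs : s * (1-q)^2 = 4*q*t^2) :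
    (1-r) * Real.exp (-(t*r/(1-r))) ≤ Real.exp s * (1 - r * Real.exp t) := by
  have h1q : (0:ℝ) < 1 - q := by linarith
  have hp0 : (0:ℝ) < 1 - r := by linarith
  set x : ℝ := t*r/(1-r) with hxdef
  have hx0 : 0 ≤ x := div_nonneg (mul_nonneg ht0 hr0.le) hp0.le
  have hxp : x * (1-r) = t * r := div_mul_cancel₀ _ hp0.ne'
  have hxe : Real.exp (-x) ≤ 1 - x + x^2 := exp_neg_le' x hx0
  have hE : Real.exp t ≤ 1 + t + 2*t^2 := exp_le' t (by linarith)
  have h2t : 2*t^2 ≤ t := by nlinarith [mul_nonneg ht0 (show (0:ℝ) ≤ 1 - 2*t by linarith)]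
  -- chain bounding r*(1+t+2t²)
  have hch1 : r*(1+t+2*t^2) ≤ r*(1+2*t) := mul_le_mul_of_nonneg_left (by linarith) hr0.le
  have hch2 : r*(1+2*t) ≤ q*(1+2*t) := mul_le_mul_of_nonneg_right hrq (by linarith)
  have hch3 : q*(1+2*t) ≤ q*(1+(1-q)/2) := mul_le_mul_of_nonneg_left (by linarith) hq0.le
  have hch4 : q*(1+(1-q)/2) ≤ 1 - (1-q)/2 := by nlinarith [sq_nonneg (1-q)]
  have hPq : (1-q)/2 ≤ 1 - r*(1+t+2*t^2) := by linarith
  have hub : 1 - r*(1+t+2*t^2) ≤ 1 - r*Real.exp t := by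
    nlinarith [mul_le_mul_of_nonneg_left hE hr0.le]
  have hge : 1 + s ≤ Real.exp s := by have := Real.add_one_le_exp s; linarith
  -- RHS lower bound
  have hR1 : Real.exp s * (1 - r*(1+t+2*t^2)) ≤ Real.exp s * (1 - r * Real.exp t) :=
    mul_le_mul_of_nonneg_left hub (Real.exp_pos s).le
  have hR2 : (1+s) * (1 - r*(1+t+2*t^2)) ≤ Real.exp s * (1 - r*(1+t+2*t^2)) :=
    mul_le_mul_of_nonneg_right hge (by linarith)
  -- LHS upper bound
  have hL1 : (1-r) * Real.exp (-x) ≤ (1-r) * (1 - x + x^2) :=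
    mul_le_mul_of_nonneg_left hxe hp0.le
  -- key polynomial inequality (multiplied by (1-q)^2)
  have hx1 : x*(1-q) ≤ t*q := by
    calc x*(1-q) ≤ x*(1-r) := mul_le_mul_of_nonneg_left (by linarith) hx0
      _ = t*r := hxp
      _ ≤ t*q := mul_le_mul_of_nonneg_left hrq ht0
  have hxtr : x*(t*r)*(1-q)^2 ≤ q^2*t^2*(1-q) := by
    calc x*(t*r)*(1-q)^2 = (x*(1-q)) * (t*(r*(1-q))) := by ring
      _ ≤ (t*q) * (t*(r*(1-q))) :=
          mul_le_mul_of_nonneg_right hx1 (mul_nonneg ht0 (mul_nonneg hr0.le h1q.le))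
      _ ≤ (t*q) * (t*(q*(1-q))) := by
          apply mul_le_mul_of_nonneg_left
            (mul_le_mul_of_nonneg_left (mul_le_mul_of_nonneg_right hrq h1q.le) ht0)
            (mul_nonneg ht0 hq0.le)
      _ = q^2*t^2*(1-q) := by ring
  have e1 : x*(1-r)*(1-q)^2 = t*r*(1-q)^2 := by rw [hxp]
  have e2 : x*(x*(1-r))*(1-q)^2 = x*(t*r)*(1-q)^2 := by rw [hxp]
  have h1 : 0 ≤ 4*q*t^2*((1 - r*(1+t+2*t^2)) - (1-q)/2) :=
    mul_nonneg (by positivity) (by linarith)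
  have h2 : 0 ≤ (t*t)*((1-q)*(1-q))*(q-r) :=
    mul_nonneg (mul_nonneg (mul_nonneg ht0 ht0) (mul_nonneg h1q.le h1q.le)) (by linarith)
  have h4 : 0 ≤ (t*t)*(1-q)*(q*q) :=
    mul_nonneg (mul_nonneg (mul_nonneg ht0 ht0) h1q.le) (mul_nonneg hq0.le hq0.le)
  have eL : (1-r)*(1 - x + x^2)*(1-q)^2 = ((1-r) - t*r)*(1-q)^2 + x*(t*r)*(1-q)^2 := by
    calc (1-r)*(1-x+x^2)*(1-q)^2 = ((1-r) - x*(1-r) + x*(x*(1-r)))*(1-q)^2 := by ring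
      _ = ((1-r) - t*r + x*(t*r))*(1-q)^2 := by rw [hxp]
      _ = ((1-r) - t*r)*(1-q)^2 + x*(t*r)*(1-q)^2 := by ring
  have G' : (1-r) * (1 - x + x^2) * (1-q)^2 ≤ ((1-q)^2 + 4*q*t^2) * (1 - r*(1+t+2*t^2)) := by
    rw [eL]
    linarith [h1, h2, h4, hxtr]
  have hexpand : (1+s)*(1-q)^2 = (1-q)^2 + 4*q*t^2 := by
    rw [add_mul, one_mul, hs]
  have hfin : (1-r) * (1 - x + x^2) ≤ (1+s) * (1 - r*(1+t+2*t^2)) := by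
    rw [← mul_le_mul_iff_of_pos_right (show (0:ℝ) < (1-q)^2 by positivity)]
    calc (1-r) * (1 - x + x^2) * (1-q)^2 ≤ ((1-q)^2 + 4*q*t^2) * (1 - r*(1+t+2*t^2)) := G'
      _ = (1+s) * (1 - r*(1+t+2*t^2)) * (1-q)^2 := by rw [← hexpand]; ring
  linarith

lemma sum_bound (q p Δ : ℝ) (hq0 : 0 < q) (hq1 : q < 1)
    (hp : 1 - q ≤ p) (hp1 : p < 1) (hΔ0 : 0 ≤ Δ) (hΔc : Δ ≤ 2*q/(1-q)) :
    Summable (fun m : ℕ => Real.exp ((((m:ℝ)+1) - 1/p - Δ) * ((1-q)^2/(8*q) * Δ)) * ((1-p)^m * p)) ∧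
    ∑' m : ℕ, Real.exp ((((m:ℝ)+1) - 1/p - Δ) * ((1-q)^2/(8*q) * Δ)) * ((1-p)^m * p)
      ≤ Real.exp (-0.5 * Δ^2 * ((1-q)^2/(8*q))) := by
  have h1q : (0:ℝ) < 1 - q := by linarith
  have hp0 : (0:ℝ) < p := by linarith
  set κ : ℝ := (1-q)^2/(8*q) with hκdef
  have hκ : 0 < κ := by positivity
  set t : ℝ := κ * Δ with htdef
  have ht0 : 0 ≤ t := by positivity
  have htq : t ≤ (1-q)/4 := by
    have he : κ * (2*q/(1-q)) = (1-q)/4 := by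
      rw [hκdef, div_mul_div_comm, div_eq_div_iff (by positivity) (by norm_num)]; ring
    calc t ≤ κ * (2*q/(1-q)) := mul_le_mul_of_nonneg_left hΔc hκ.le
      _ = (1-q)/4 := he
  set s : ℝ := κ * Δ^2 / 2 with hsdef
  have hs0 : 0 ≤ s := by positivity
  have hs : s * (1-q)^2 = 4*q*t^2 := by
    rw [hsdef, htdef, hκdef]
    field_simp
    ring
  have hΔt : Δ * t = 2 * s := by rw [htdef, hsdef]; ring
  have hnegs : -0.5 * Δ^2 * κ = -s := by rw [hsdef]; ring
  clear_value t s
  obtain ⟨r, hrdef⟩ : ∃ r : ℝ, r = 1 - p := ⟨_, rfl⟩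
  have hr0 : 0 < r := by rw [hrdef]; linarith
  have hrq : r ≤ q := by rw [hrdef]; linarith
  have hpr : p = 1 - r := by rw [hrdef]; ring
  have hE : (0:ℝ) < Real.exp t := Real.exp_pos t
  set ρ : ℝ := r * Real.exp t with hρdef
  have hρ0 : 0 ≤ ρ := by positivity
  clear_value ρ
  have hcore := core_ineq q r t s hq0 hq1 hr0 hrq ht0 htq hs0 hs
  have hρ1 : ρ < 1 := by
    by_contra h
    push_neg at h
    have hL : 0 < (1-r) * Real.exp (-(t*r/(1-r))) := by
      apply mul_pos (by linarith) (Real.exp_pos _)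
    have hR : Real.exp s * (1 - r * Real.exp t) ≤ 0 :=
      mul_nonpos_of_nonneg_of_nonpos (Real.exp_pos s).le (by linarith)
    rw [hρdef] at h
    linarith [hcore, hR]
  set C : ℝ := p * Real.exp ((1 - 1/p - Δ) * t) with hCdef
  clear_value C
  have hfun : ∀ m : ℕ, Real.exp ((((m:ℝ)+1) - 1/p - Δ) * t) * ((1-p)^m * p) = C * ρ^m := by
    intro m
    have e1 : (((m:ℝ)+1) - 1/p - Δ) * t = (1 - 1/p - Δ) * t + (m:ℝ)*t := by ring
    rw [e1, Real.exp_add, Real.exp_nat_mul, hCdef, hρdef, mul_pow, ← hrdef]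
    ring
  have hsum : Summable (fun m : ℕ => C * ρ^m) := (summable_geometric_of_lt_one hρ0 hρ1).mul_left C
  refine ⟨hsum.congr (fun m => (hfun m).symm), ?_⟩
  have e2 : ∑' m : ℕ, Real.exp ((((m:ℝ)+1) - 1/p - Δ) * t) * ((1-p)^m * p) = C * (1-ρ)⁻¹ := by
    rw [tsum_congr hfun, tsum_mul_left, tsum_geometric_of_lt_one hρ0 hρ1]
  rw [e2, hnegs]
  have hρlt : (0:ℝ) < 1 - ρ := by linarith
  rw [mul_inv_le_iff₀ hρlt]
  -- goal : C ≤ exp(-s) * (1-ρ)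
  have hinv : 1 - 1/p = -(r/p) := by
    rw [hrdef]; field_simp; ring
  have e3 : (1 - 1/p - Δ) * t = -(t*r/(1-r)) + -(2*s) := by
    rw [show (1 - 1/p - Δ)*t = (1-1/p)*t - Δ*t from by ring, hinv, hΔt, hpr]
    ring
  have hC2 : C = ((1-r) * Real.exp (-(t*r/(1-r)))) * Real.exp (-(2*s)) := by
    rw [hCdef, e3, Real.exp_add, hpr]; ring
  have hfinal : ((1-r) * Real.exp (-(t*r/(1-r)))) * Real.exp (-(2*s))
      ≤ (Real.exp s * (1 - ρ)) * Real.exp (-(2*s)) :=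
    mul_le_mul_of_nonneg_right (by rw [hρdef]; exact hcore) (Real.exp_pos _).le
  have e4 : (Real.exp s * (1 - ρ)) * Real.exp (-(2*s)) = Real.exp (-s) * (1-ρ) := by
    rw [mul_right_comm, ← Real.exp_add, show s + -(2*s) = -s from by ring]
  rw [hC2]
  exact hfinal.trans (le_of_eq e4)

/-- There exist `κ > 0` and `c > 0` such that for every `p ∈ [1-q, 1)` (with `q ∈ (0,1)`
fixed) and `Δ ∈ [0,c]`, a geometric random variable `X` with parameter `p` satisfies
`E[exp((X - 1/p - Δ) κ Δ)] ≤ exp(-0.5 Δ² κ)`. -/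
theorem geometric_exponential_bound (q : ℝ) (hq : q ∈ Set.Ioo (0:ℝ) 1) :
    ∃ κ > (0:ℝ), ∃ c > (0:ℝ),
      ∀ p ∈ Set.Ico (1 - q) (1:ℝ), ∀ Δ ∈ Set.Icc (0:ℝ) c,
        ∀ (Ω : Type) (_ : MeasurableSpace Ω) (μ : Measure Ω), IsProbabilityMeasure μ →
          ∀ X : Ω → ℕ, (∀ ω, 1 ≤ X ω) →
            (∀ m : ℕ, 1 ≤ m → μ {ω | X ω = m} = ENNReal.ofReal ((1 - p) ^ (m - 1) * p)) →
            ∫ ω, Real.exp (((X ω : ℝ) - 1 / p - Δ) * (κ * Δ)) ∂μ ≤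
              Real.exp (-0.5 * Δ ^ 2 * κ) := by
  obtain ⟨hq0, hq1⟩ := hq
  have h1q : (0:ℝ) < 1 - q := by linarith
  refine ⟨(1-q)^2/(8*q), by positivity, 2*q/(1-q), div_pos (by linarith) h1q, ?_⟩
  intro p hp Δ hΔ Ω mΩ μ hμ X hX1 hpmf
  obtain ⟨hp1, hp2⟩ := hp
  obtain ⟨hΔ0, hΔc⟩ := hΔ
  have hp0 : (0:ℝ) < p := by linarith
  rcases eq_or_lt_of_le hΔ0 with hΔz | hΔpos
  · -- Δ = 0
    rw [← hΔz]
    simp only [mul_zero, sub_zero, Real.exp_zero, integral_const, measure_univ,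
      ENNReal.toReal_one, smul_eq_mul, mul_one, ne_eq, OfNat.ofNat_ne_zero,
      not_false_eq_true, zero_pow, mul_zero, neg_zero, zero_mul]
    norm_num
  · -- Δ > 0
    set κ : ℝ := (1-q)^2/(8*q) with hκdef
    have hκ : 0 < κ := by rw [hκdef]; positivity
    set t : ℝ := κ * Δ with htdef
    have ht_pos : 0 < t := mul_pos hκ hΔpos
    set f : Ω → ℝ := fun ω => Real.exp (((X ω : ℝ) - 1/p - Δ) * t) with hfdef
    show ∫ ω, f ω ∂μ ≤ Real.exp (-0.5 * Δ^2 * κ)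
    by_cases hint : Integrable f μ
    swap
    · rw [integral_undef hint]; exact (Real.exp_pos _).le
    have hf0 : 0 ≤ᵐ[μ] f := Filter.Eventually.of_forall (fun ω => (Real.exp_pos _).le)
    rw [integral_eq_lintegral_of_nonneg_ae hf0 hint.aestronglyMeasurable]
    apply ENNReal.toReal_le_of_le_ofReal (Real.exp_pos _).le
    set g' : Ω → ℝ := hint.aestronglyMeasurable.mk f with hg'def
    have hae : f =ᵐ[μ] g' := hint.aestronglyMeasurable.ae_eq_mk
    have hmeas : Measurable g' := hint.aestronglyMeasurable.stronglyMeasurable_mk.measurable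
    set G : ℕ → ℝ := fun n => Real.exp (((n:ℝ) - 1/p - Δ) * t) with hGdef
    have hGinj : Function.Injective G := by
      intro a b hab
      have h1 : ((a:ℝ) - 1/p - Δ) * t = ((b:ℝ) - 1/p - Δ) * t := Real.exp_injective hab
      have h2 : ((a:ℝ) - 1/p - Δ) = ((b:ℝ) - 1/p - Δ) := mul_right_cancel₀ ht_pos.ne' h1
      have h3 : (a:ℝ) = b := by linarith
      exact_mod_cast h3
    have hfX : ∀ ω, f ω = G (X ω) := fun ω => rfl
    set B : ℕ → Set Ω := fun m => g' ⁻¹' {G (m+1)} with hBdef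
    have hBm : ∀ m, MeasurableSet (B m) := fun m => hmeas (measurableSet_singleton _)
    have hBd : Pairwise (Function.onFun Disjoint B) := by
      intro m n hmn
      apply Set.disjoint_left.2
      intro ω h1 h2
      have e1 : g' ω = G (m+1) := h1
      have e2 : g' ω = G (n+1) := h2
      have h3 : m + 1 = n + 1 := hGinj (e1.symm.trans e2)
      exact hmn (by omega)
    have hnull : μ {ω | ¬ f ω = g' ω} = 0 := by
      have := hae
      rw [Filter.EventuallyEq, MeasureTheory.ae_iff] at this
      exact this
    have hsubset : ∀ ω, f ω = g' ω → ω ∈ ⋃ m, B m := by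
      intro ω heq
      refine Set.mem_iUnion.2 ⟨X ω - 1, ?_⟩
      have hx : X ω - 1 + 1 = X ω := by have := hX1 ω; omega
      simp only [hBdef, Set.mem_preimage, Set.mem_singleton_iff]
      rw [hx, ← heq, hfX ω]
    have hcompl : μ (⋃ m, B m)ᶜ = 0 := by
      apply measure_mono_null _ hnull
      intro ω hω heq
      exact hω (hsubset ω heq)
    have hμB : ∀ m : ℕ, μ (B m) = ENNReal.ofReal ((1-p)^m * p) := by
      intro m
      have hset : B m =ᵐ[μ] {ω | X ω = m+1} := by
        rw [MeasureTheory.ae_eq_set]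
        constructor
        · apply measure_mono_null _ hnull
          intro ω ⟨h1, h2⟩ heq
          apply h2
          have : G (X ω) = G (m+1) := by rw [← hfX ω, heq]; exact h1
          exact hGinj this
        · apply measure_mono_null _ hnull
          intro ω ⟨h1, h2⟩ heq
          apply h2
          simp only [hBdef, Set.mem_preimage, Set.mem_singleton_iff]
          have h1' : X ω = m + 1 := h1
          rw [← heq, hfX ω, h1']
      rw [measure_congr hset]
      have := hpmf (m+1) (by omega)
      simpa using this
    calc ∫⁻ ω, ENNReal.ofReal (f ω) ∂μ
        = ∫⁻ ω, ENNReal.ofReal (g' ω) ∂μ :=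
          lintegral_congr_ae (hae.mono fun ω h => by dsimp only; rw [h])
      _ = ∫⁻ ω in ⋃ m, B m, ENNReal.ofReal (g' ω) ∂μ
          + ∫⁻ ω in (⋃ m, B m)ᶜ, ENNReal.ofReal (g' ω) ∂μ :=
          (lintegral_add_compl _ (MeasurableSet.iUnion hBm)).symm
      _ = ∫⁻ ω in ⋃ m, B m, ENNReal.ofReal (g' ω) ∂μ := by
          rw [Measure.restrict_eq_zero.2 hcompl, lintegral_zero_measure, add_zero]
      _ = ∑' m, ∫⁻ ω in B m, ENNReal.ofReal (g' ω) ∂μ := lintegral_iUnion hBm hBd _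
      _ = ∑' m, ENNReal.ofReal (G (m+1)) * μ (B m) := by
          refine tsum_congr fun m => ?_
          rw [setLIntegral_congr_fun (hBm m)
            (fun ω hω => by
              show ENNReal.ofReal (g' ω) = ENNReal.ofReal (G (m+1))
              have : g' ω = G (m+1) := hω
              rw [this])]
          exact setLIntegral_const _ _
      _ = ∑' m, ENNReal.ofReal (G (m+1) * ((1-p)^m * p)) := by
          refine tsum_congr fun m => ?_
          rw [hμB m, ← ENNReal.ofReal_mul (Real.exp_pos _).le]
      _ = ENNReal.ofReal (∑' m, G (m+1) * ((1-p)^m * p)) := by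
          rw [ENNReal.ofReal_tsum_of_nonneg]
          · intro m
            exact mul_nonneg (Real.exp_pos _).le
              (mul_nonneg (pow_nonneg (by linarith) m) hp0.le)
          · apply ((sum_bound q p Δ hq0 hq1 hp1 hp2 hΔ0 hΔc).1).congr
            intro m
            rw [hGdef]
            push_cast
            rw [htdef, hκdef]
      _ ≤ ENNReal.ofReal (Real.exp (-0.5 * Δ^2 * κ)) := by
          apply ENNReal.ofReal_le_ofReal
          have hb := (sum_bound q p Δ hq0 hq1 hp1 hp2 hΔ0 hΔc).2
          have he : ∀ m : ℕ, G (m+1) * ((1-p)^m * p)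
              = Real.exp ((((m:ℝ)+1) - 1/p - Δ) * ((1-q)^2/(8*q) * Δ)) * ((1-p)^m * p) := by
            intro m
            rw [hGdef]
            push_cast
            rw [htdef, hκdef]
          rw [tsum_congr he]
          exact hb
end

section
/- Let q ∈ (0,1) be the unique zero in (0,1) of p ↦ 2p + ln(1-p). For all sufficiently large n, every real s in the interval [n^{1/4}, n/3] satisfies n·(2(s/n) + ln(1 - s/n)) - 4.5 ≥ (ln s)·√s. -/
lemma h_lower (x : ℝ) (hx0 : 0 ≤ x) (hx3 : x ≤ 1/3) :
    x/2 ≤ 2*x + Real.log (1-x) := by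
  have h1 : (0:ℝ) < 1 - x := by linarith
  have h2 : Real.log (1-x)⁻¹ ≤ (1-x)⁻¹ - 1 :=
    Real.log_le_sub_one_of_pos (by positivity)
  rw [Real.log_inv] at h2
  have h3 : (1-x)⁻¹ ≤ 1 + 3*x/2 := by
    rw [inv_eq_one_div, div_le_iff₀ h1]; nlinarith
  linarith

lemma log_le_sqrt_div (s : ℝ) (hs : (65536:ℝ) ≤ s) :
    Real.log s ≤ Real.sqrt s / 4 := by
  have hs0 : (0:ℝ) < s := by linarith
  have h256 : (256:ℝ) ≤ Real.sqrt s := by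
    rw [show (256:ℝ) = Real.sqrt (256^2) by
      rw [Real.sqrt_sq]; norm_num]
    exact Real.sqrt_le_sqrt (by norm_num at hs ⊢; linarith)
  have hsq : Real.sqrt s * Real.sqrt s = s := Real.mul_self_sqrt hs0.le
  have h4 : Real.sqrt s ≤ s / 256 := by nlinarith [Real.sqrt_nonneg s]
  have h5 : Real.sqrt (Real.sqrt s) ≤ Real.sqrt s / 16 := by
    have h16 : Real.sqrt 256 = 16 := by
      rw [show (256:ℝ) = 16^2 by norm_num, Real.sqrt_sq]; norm_num
    have : Real.sqrt (s/256) = Real.sqrt s / 16 := by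
      rw [Real.sqrt_div hs0.le, h16]
    calc Real.sqrt (Real.sqrt s) ≤ Real.sqrt (s/256) := Real.sqrt_le_sqrt (by linarith)
      _ = Real.sqrt s / 16 := this
  have h6 : Real.log s = 4 * Real.log (Real.sqrt (Real.sqrt s)) := by
    rw [Real.log_sqrt (Real.sqrt_nonneg s), Real.log_sqrt hs0.le]; ring
  have h7 : Real.log (Real.sqrt (Real.sqrt s)) ≤ Real.sqrt (Real.sqrt s) - 1 :=
    Real.log_le_sub_one_of_pos (by positivity)
  rw [h6]; linarith

/-- Let `q ∈ (0,1)` be the unique zero of `p ↦ 2p + log(1-p)` in `(0,1)`. For all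
sufficiently large `n`, every real `s ∈ [n^{1/4}, n/3]` satisfies
`n (2 s/n + log(1 - s/n)) - 4.5 ≥ (log s) √s`. -/
theorem ws_bound_first_interval (q : ℝ) (hq : q ∈ Set.Ioo (0:ℝ) 1)
    (hzero : 2 * q + Real.log (1 - q) = 0)
    (huniq : ∀ p ∈ Set.Ioo (0:ℝ) 1, 2 * p + Real.log (1 - p) = 0 → p = q) :
    ∃ N : ℕ, ∀ n : ℕ, N ≤ n →
      ∀ s : ℝ, s ∈ Set.Icc ((n:ℝ) ^ ((1:ℝ)/4)) ((n:ℝ)/3) →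
        Real.log s * Real.sqrt s ≤
          (n:ℝ) * (2 * (s/n) + Real.log (1 - s/n)) - 4.5 := by
  refine ⟨65536^4, fun n hn s hs => ?_⟩
  obtain ⟨hs1, hs2⟩ := hs
  have hn0 : (0:ℝ) < n := by
    have : (1:ℕ) ≤ n := le_trans (by norm_num) hn
    exact_mod_cast Nat.lt_of_lt_of_le Nat.zero_lt_one this
  have hN : ((65536:ℝ)^(4:ℕ)) ^ ((1:ℝ)/4) = 65536 := by
    rw [← Real.rpow_natCast (65536:ℝ) 4, ← Real.rpow_mul (by norm_num)]
    norm_num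
  have hs65536 : (65536:ℝ) ≤ s := by
    have hcast : ((65536:ℝ)^(4:ℕ)) ≤ (n:ℝ) := by exact_mod_cast hn
    calc (65536:ℝ) = ((65536:ℝ)^(4:ℕ)) ^ ((1:ℝ)/4) := hN.symm
      _ ≤ (n:ℝ) ^ ((1:ℝ)/4) := Real.rpow_le_rpow (by positivity) hcast (by norm_num)
      _ ≤ s := hs1
  have hs0 : (0:ℝ) < s := by linarith
  -- x := s/n
  have hx0 : 0 ≤ s/n := by positivity
  have hx3 : s/n ≤ 1/3 := by
    rw [div_le_iff₀ hn0]; linarith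
  have hA : s/n/2 ≤ 2*(s/n) + Real.log (1 - s/n) := h_lower _ hx0 hx3
  have hB : (n:ℝ) * (s/n/2) ≤ (n:ℝ) * (2*(s/n) + Real.log (1 - s/n)) :=
    mul_le_mul_of_nonneg_left hA hn0.le
  have hC : (n:ℝ) * (s/n/2) = s/2 := by field_simp
  have hD : Real.log s * Real.sqrt s ≤ (Real.sqrt s / 4) * Real.sqrt s :=
    mul_le_mul_of_nonneg_right (log_le_sqrt_div s hs65536) (Real.sqrt_nonneg s)
  have hsq : Real.sqrt s * Real.sqrt s = s := Real.mul_self_sqrt hs0.le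
  have hE : (Real.sqrt s / 4) * Real.sqrt s = s/4 := by
    rw [div_mul_eq_mul_div, hsq]
  rw [hC] at hB
  rw [hE] at hD
  linarith
end

section
/- Let q be the unique zero in (0,1) of h(x) = 2x + ln(1-x). Then h'(q) = 2 - 1/(1-q) < 0, and for all sufficiently large n and all s in [n/2, nq - (ln n)²·√n], one has h(s/n) ≥ -h'(q)·(ln n)²/(2√n). -/
open Filter Real

/-- `h` is antitone on `[1/2, 1)`. -/
lemma h_anti_aux {x y : ℝ} (hx : 1/2 ≤ x) (hxy : x ≤ y) (hy : y < 1) :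
    2*y + Real.log (1-y) ≤ 2*x + Real.log (1-x) := by
  have h1y : 0 < 1 - y := by linarith
  have h1x : 0 < 1 - x := by linarith
  have hl : Real.log ((1-y)/(1-x)) ≤ (1-y)/(1-x) - 1 :=
    Real.log_le_sub_one_of_pos (by positivity)
  rw [Real.log_div h1y.ne' h1x.ne'] at hl
  have h2 : (1-y)/(1-x) - 1 ≤ 2*(x - y) := by
    rw [div_sub_one h1x.ne', div_le_iff₀ h1x]
    nlinarith [mul_nonneg (by linarith : (0:ℝ) ≤ y - x) (by linarith : (0:ℝ) ≤ 2*x - 1)]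
  linarith

lemma log_one_add_ge {u : ℝ} (hu : 0 ≤ u) : 1 - 1/(1+u) ≤ Real.log (1+u) := by
  have h1u : (0:ℝ) < 1 + u := by linarith
  have h := Real.log_le_sub_one_of_pos (x := 1/(1+u)) (by positivity)
  rw [one_div, Real.log_inv] at h
  rw [one_div]
  linarith

/-- Key lower bound for `h(q - (1-q)u)` when `u` is small. -/
lemma h_low_aux {q u : ℝ} (hq1 : q < 1) (hhalf : 1/2 < q)
    (hzero : 2*q + Real.log (1-q) = 0) (hu0 : 0 ≤ u)
    (h3 : u * (3/2 - q) ≤ q - 1/2) :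
    (1/(1-q) - 2)/2 * ((1-q)*u) ≤ 2*(q-(1-q)*u) + Real.log (1-(q-(1-q)*u)) := by
  have h1q : 0 < 1 - q := by linarith
  have h1u : (0:ℝ) < 1 + u := by linarith
  have heq2 : 1 - (q - (1-q)*u) = (1-q)*(1+u) := by ring
  rw [heq2, Real.log_mul h1q.ne' h1u.ne']
  have key : (3/2 - q) * u ≤ 1 - 1/(1+u) := by
    have e : 1 - 1/(1+u) = u/(1+u) := by field_simp; ring
    rw [e, le_div_iff₀ h1u]
    have h4 : (3/2 - q) * (1 + u) ≤ 1 := by nlinarith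
    nlinarith [mul_le_mul_of_nonneg_left h4 hu0]
  have hlog : 1 - 1/(1+u) ≤ Real.log (1+u) := log_one_add_ge hu0
  have hL : (1/(1-q) - 2)/2 * ((1-q)*u) = (q - 1/2)*u := by field_simp; ring
  rw [hL]
  nlinarith [key, hlog]

/-- Let `q` be the unique zero of `h x = 2x + log(1-x)` in `(0,1)`. Then
`h'(q) = 2 - 1/(1-q) < 0`, and for all sufficiently large `n` and all
`s ∈ [n/2, nq - (log n)² √n]`, one has `h(s/n) ≥ -h'(q) (log n)²/(2√n)`. -/
theorem h_bound_third_interval (q : ℝ) (hq : q ∈ Set.Ioo (0:ℝ) 1)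
    (hzero : 2 * q + Real.log (1 - q) = 0)
    (huniq : ∀ p ∈ Set.Ioo (0:ℝ) 1, 2 * p + Real.log (1 - p) = 0 → p = q) :
    2 - 1 / (1 - q) < 0 ∧
    ∃ N : ℕ, ∀ n : ℕ, N ≤ n →
      ∀ s : ℝ, s ∈ Set.Icc ((n:ℝ)/2) ((n:ℝ) * q - (Real.log n) ^ 2 * Real.sqrt n) →
        -(2 - 1 / (1 - q)) * (Real.log n) ^ 2 / (2 * Real.sqrt n) ≤
          2 * (s/n) + Real.log (1 - s/n) := by
  obtain ⟨hq0, hq1⟩ := hq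
  have h1q : 0 < 1 - q := by linarith
  -- q > 1/2
  have hhalf : 1/2 < q := by
    by_contra h
    push_neg at h
    have hne : 1/(1-q) ≠ 1 := by
      intro he
      rw [div_eq_one_iff_eq h1q.ne'] at he
      linarith
    have hlt : Real.log (1/(1-q)) < 1/(1-q) - 1 :=
      Real.log_lt_sub_one_of_pos (by positivity) hne
    rw [one_div, Real.log_inv] at hlt
    have h2 : 2*q < (1-q)⁻¹ - 1 := by linarith
    have h3 : (1-q) * (1-q)⁻¹ = 1 := mul_inv_cancel₀ h1q.ne'
    nlinarith
  have hderiv : 2 - 1 / (1 - q) < 0 := by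
    have : 2 < 1/(1-q) := (lt_div_iff₀ h1q).mpr (by linarith)
    linarith
  refine ⟨hderiv, ?_⟩
  have h32 : (0:ℝ) < 3/2 - q := by linarith
  set ε : ℝ := (1-q) * ((q - 1/2)/(3/2 - q)) with hε
  have hεpos : 0 < ε := by
    apply mul_pos h1q
    apply div_pos <;> linarith
  have htd : Tendsto (fun x : ℝ => Real.log x ^ (2:ℝ) / x ^ (1/2:ℝ)) atTop (nhds 0) :=
    (isLittleO_log_rpow_rpow_atTop 2 (by norm_num : (0:ℝ) < 1/2)).tendsto_div_nhds_zero
  have hev : ∀ᶠ x : ℝ in atTop, Real.log x ^ (2:ℝ) / x ^ (1/2:ℝ) < ε :=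
    htd.eventually_lt_const hεpos
  obtain ⟨M, hM⟩ := eventually_atTop.mp hev
  obtain ⟨N₀, hN₀⟩ := exists_nat_ge (max M 1)
  refine ⟨max N₀ 2, fun n hn s hs => ?_⟩
  have hn2 : 2 ≤ n := le_trans (le_max_right _ _) hn
  have hnR : (1:ℝ) ≤ (n:ℝ) := by exact_mod_cast le_trans (by norm_num) hn2
  have hnpos : (0:ℝ) < n := by linarith
  have hsq : 0 < Real.sqrt n := Real.sqrt_pos.mpr hnpos
  have hss : Real.sqrt n * Real.sqrt n = n := Real.mul_self_sqrt hnpos.le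
  have hlogn : 0 ≤ Real.log n := Real.log_nonneg hnR
  have hδ0 : 0 ≤ (Real.log n)^2 / Real.sqrt n := by positivity
  -- δ ≤ ε
  have hδε : (Real.log n)^2 / Real.sqrt n ≤ ε := by
    have hnM : M ≤ (n:ℝ) := by
      have h2 : (N₀:ℝ) ≤ n := by exact_mod_cast le_trans (le_max_left _ _) hn
      calc M ≤ max M 1 := le_max_left _ _
        _ ≤ (N₀:ℝ) := hN₀
        _ ≤ n := h2
    have h := hM (n:ℝ) hnM
    have heq : Real.log (n:ℝ) ^ (2:ℝ) / (n:ℝ) ^ (1/2:ℝ) = (Real.log n)^2 / Real.sqrt n := by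
      rw [Real.sqrt_eq_rpow]
      congr 1
      rw [show (2:ℝ) = ((2:ℕ):ℝ) by norm_num, Real.rpow_natCast]
    rw [heq] at h
    linarith
  set δ : ℝ := (Real.log n)^2 / Real.sqrt n with hδ
  -- bounds on x = s/n
  have hx1 : 1/2 ≤ s/n := by
    rw [le_div_iff₀ hnpos]
    have := hs.1; linarith
  have hx2 : s/n ≤ q - δ := by
    rw [div_le_iff₀ hnpos]
    have h1 : (q - δ) * n = n * q - (Real.log n)^2 * Real.sqrt n := by
      rw [hδ]
      field_simp
      nlinarith [hss]
    rw [h1]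
    exact hs.2
  have hqδ1 : q - δ < 1 := by linarith
  have hstep1 : 2*(q-δ) + Real.log (1-(q-δ)) ≤ 2*(s/n) + Real.log (1-s/n) :=
    h_anti_aux hx1 hx2 hqδ1
  -- apply the lower-bound lemma with u = δ/(1-q)
  have hu0 : 0 ≤ δ/(1-q) := by positivity
  have h3 : (δ/(1-q)) * (3/2 - q) ≤ q - 1/2 := by
    rw [div_mul_eq_mul_div, div_le_iff₀ h1q]
    have hε3 : ε * (3/2 - q) = (q - 1/2) * (1-q) := by
      rw [hε, mul_assoc, div_mul_cancel₀ _ h32.ne']; ring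
    calc δ * (3/2 - q) ≤ ε * (3/2 - q) := by
          apply mul_le_mul_of_nonneg_right hδε h32.le
      _ = (q - 1/2) * (1-q) := hε3
  have hlow := h_low_aux hq1 hhalf hzero hu0 h3
  have hcanc : (1-q) * (δ/(1-q)) = δ := by field_simp
  rw [hcanc] at hlow
  have hLHS : -(2 - 1/(1-q)) * (Real.log n)^2 / (2 * Real.sqrt n) = (1/(1-q) - 2)/2 * δ := by
    rw [hδ]
    field_simp
    ring
  rw [hLHS]
  linarith
end
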